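/- Let σ > 0, λ > 0, and let r, t ∈ ℝ satisfy |r·t| ≤ π. Define Υ(s) = 3·e^{−irs + (λ−σ²)s²/2} − 2 for s ∈ ℝ (this is Υ(s;r,λ) = 3·e^{−irs+λs²/2}·φ(s) − 2 with φ(s) = e^{−σ²s²/2}). Then max{ |Υ(t)|, |Υ(t)² − Υ(2t)| + |Υ(t)|² } ≥ 1 + (r·t/π)⁴. -/

import Mathlib

open Real

/-- `Υ(s;r,λ)` with `φ(s) = e^{−σ²s²/2}`, i.e. `Υ(s) = 3·e^{−irs + (λ−σ²)s²/2} − 2`. -/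
noncomputable def UpsGauss (σ lam r : ℝ) (s : ℝ) : ℂ :=
  3 * Complex.exp (-(Complex.I * (r : ℂ) * (s : ℂ)) +
        (((lam - σ ^ 2) * s ^ 2 / 2 : ℝ) : ℂ)) - 2

set_option maxHeartbeats 1000000 in
lemma quartic_key (R c : ℝ) (hR : 0 < R) (hc1 : c ≤ 1) (hc2 : -1 ≤ c)
    (h : 9*R^2 - 12*R*c + 4 ≤ (1 + ((1-c)/2)^2)^2) :
    1 + ((1-c)/2)^2 ≤ ((9*R^2 - 3*R^4) * (2*c^2-1) - 12*R*c + 6) + (9*R^2 - 12*R*c + 4) := by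
  set Q := ((1-c)/2)^2 with hQdef
  have hQ0 : 0 ≤ Q := sq_nonneg _
  have hQ1 : Q ≤ 1 := by rw [hQdef]; nlinarith
  have h4 : (1 + Q)^2 ≤ 4 := by nlinarith
  have hc0 : 0 < c := by nlinarith [mul_pos hR hR]
  have hQ14 : Q ≤ 1/4 := by rw [hQdef]; nlinarith
  have h2516 : (1 + Q)^2 ≤ 25/16 := by nlinarith
  have hc34 : 3/4 ≤ c := by nlinarith [sq_nonneg (2*R-1), mul_pos hR hR]
  have hRc : 0 ≤ R * (1 - c) := mul_nonneg hR.le (by linarith)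
  have hR14 : 1/4 ≤ R := by nlinarith
  have hQv : Q ≤ (1-c)/16 := by rw [hQdef]; nlinarith
  have hQQ : Q^2 ≤ Q/4 := by nlinarith
  have hRv : 3*(1-c) ≤ 12*R*(1-c) := by
    nlinarith [mul_nonneg (by linarith : (0:ℝ) ≤ 4*R - 1) (by linarith : (0:ℝ) ≤ 1 - c)]
  have hsq : (3*R-2)^2 ≤ 1 := by nlinarith
  have hR1 : R ≤ 1 := by nlinarith [hsq, sq_nonneg (R-1)]
  have hR13 : 1/3 ≤ R := by nlinarith [hsq, sq_nonneg (3*R-1)]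
  have hP : 0 ≤ 47/4 + 12*(R-1) - 18*(R-1)^2 - 24*(R-1)^3 - 6*(R-1)^4 := by
    nlinarith [mul_nonneg (mul_nonneg (sub_nonneg.2 hR1) (sub_nonneg.2 hR1)) (sub_nonneg.2 hR13), sq_nonneg ((R-1)*(R-1/3)), mul_nonneg (sub_nonneg.2 hR1) (sub_nonneg.2 hR13), sq_nonneg (R-1)]
  have t1 : 0 ≤ (1-c)^2 * (47/4 + 12*(R-1) - 18*(R-1)^2 - 24*(R-1)^3 - 6*(R-1)^4) :=
    mul_nonneg (sq_nonneg _) hP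
  have t2 : 0 ≤ 12*(R-1)^2*(1-c)*(3+4*(R-1)+(R-1)^2) := by
    have h1 : (0:ℝ) ≤ 3+4*(R-1)+(R-1)^2 := by nlinarith [sq_nonneg (R-1)]
    exact mul_nonneg (mul_nonneg (by positivity) (by linarith)) h1
  have t3 : 0 ≤ -3*(R-1)^3*(4+(R-1)) := by
    have h1 : (0:ℝ) ≤ (1-R)^3 := pow_nonneg (by linarith) 3
    nlinarith [h1]
  rw [hQdef]
  linarith [t1, t2, t3]

lemma cos_le_one_sub (x : ℝ) (hx : |x| ≤ π) : 2 * (x/π)^2 ≤ 1 - Real.cos x := by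
  have hπ : 0 < π := Real.pi_pos
  wlog hx0 : 0 ≤ x generalizing x
  · have := this (-x) (by rwa [abs_neg]) (by linarith [le_of_not_ge hx0])
    simpa [Real.cos_neg, neg_div] using this
  have h1 : x / π ≤ Real.sin (x/2) := by
    have := Real.mul_le_sin (x := x/2) (by linarith) (by rw [abs_of_nonneg hx0] at hx; linarith)
    calc x / π = 2/π * (x/2) := by field_simp
    _ ≤ Real.sin (x/2) := this
  have h2 : (x/π)^2 ≤ Real.sin (x/2)^2 := by
    have h0 : 0 ≤ x / π := div_nonneg hx0 hπ.le
    nlinarith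
  have h3 : Real.cos x = 1 - 2 * Real.sin (x/2)^2 := by
    rw [show x = 2*(x/2) by ring, Real.cos_two_mul']
    have := Real.sin_sq_add_cos_sq (2*(x/2)/2)
    ring_nf
    ring_nf at this
    linarith
  linarith


lemma ups_re (σ lam r s : ℝ) : (UpsGauss σ lam r s).re
    = 3 * Real.exp ((lam - σ^2)*s^2/2) * Real.cos (r*s) - 2 := by
  simp [UpsGauss, Complex.exp_re, ← Complex.ofReal_pow, Real.cos_neg, mul_comm]; ring

lemma ups_im (σ lam r s : ℝ) : (UpsGauss σ lam r s).im
    = -(3 * Real.exp ((lam - σ^2)*s^2/2) * Real.sin (r*s)) := by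
  simp [UpsGauss, Complex.exp_im, ← Complex.ofReal_pow, Real.sin_neg, mul_comm]; ring


/-- Quartic gap (Lemma 4.3): for any `σ² > 0`, `λ > 0` and `|rt| ≤ π`,
`max{|Υ(t)|, |Υ(t)² − Υ(2t)| + |Υ(t)|²} ≥ 1 + (rt/π)⁴`. -/
theorem quartic_gap (σ lam r t : ℝ) (hσ : 0 < σ) (hlam : 0 < lam)
    (hrt : |r * t| ≤ π) :
    1 + (r * t / π) ^ 4 ≤
      max ‖UpsGauss σ lam r t‖
        (‖(UpsGauss σ lam r t) ^ 2 - UpsGauss σ lam r (2 * t)‖ +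
          ‖UpsGauss σ lam r t‖ ^ 2) := by
  have hπ : 0 < π := Real.pi_pos
  set x := r * t with hxdef
  set a := (lam - σ^2) * t^2 / 2 with hadef
  set R := Real.exp a with hRdef
  set c := Real.cos x with hcdef
  set s := Real.sin x with hsdef
  have hR : 0 < R := Real.exp_pos a
  have hsc : s^2 + c^2 = 1 := Real.sin_sq_add_cos_sq x
  have hre_t : (UpsGauss σ lam r t).re = 3*R*c - 2 := ups_re σ lam r t
  have him_t : (UpsGauss σ lam r t).im = -(3*R*s) := ups_im σ lam r t
  have hre_2t : (UpsGauss σ lam r (2*t)).re = 3*R^4*(2*c^2-1) - 2 := by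
    have h1 : (lam - σ^2)*(2*t)^2/2 = 4*a := by rw [hadef]; ring
    have h2 : Real.exp (4*a) = R^4 := by
      rw [hRdef, ← Real.exp_nat_mul]; norm_num
    have h3 : r*(2*t) = 2*x := by rw [hxdef]; ring
    rw [ups_re, h1, h2, h3, Real.cos_two_mul, hcdef]
  have hA2 : ‖UpsGauss σ lam r t‖^2 = 9*R^2 - 12*R*c + 4 := by
    rw [Complex.sq_norm, Complex.normSq_apply, hre_t, him_t]
    linear_combination (9*R^2) * hsc
  have hre_diff : ((UpsGauss σ lam r t)^2 - UpsGauss σ lam r (2*t)).re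
      = (9*R^2 - 3*R^4)*(2*c^2-1) - 12*R*c + 6 := by
    rw [Complex.sub_re, sq, Complex.mul_re, hre_t, him_t, hre_2t]
    linear_combination (-9*R^2) * hsc
  rcases le_or_gt (1 + (r*t/π)^4) ‖UpsGauss σ lam r t‖ with hA | hA
  · exact hA.trans (le_max_left _ _)
  · apply le_trans _ (le_max_right _ _)
    have hxq : (r*t/π)^4 ≤ ((1 - c)/2)^2 := by
      have h1 : 2*(x/π)^2 ≤ 1 - c := cos_le_one_sub x hrt
      have h2 : 0 ≤ (x/π)^2 := sq_nonneg _
      calc (r*t/π)^4 = ((x/π)^2)^2 := by rw [hxdef]; ring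
      _ ≤ ((1-c)/2)^2 := by nlinarith
    have hq0 : 0 ≤ (r*t/π)^4 := by positivity
    have hAQ : 9*R^2 - 12*R*c + 4 ≤ (1 + ((1-c)/2)^2)^2 := by
      rw [← hA2]
      have h0 : 0 ≤ ‖UpsGauss σ lam r t‖ := norm_nonneg _
      nlinarith [hA.le, hxq]
    have hkey := quartic_key R c hR (Real.cos_le_one x) (Real.neg_one_le_cos x) hAQ
    have hB : (9*R^2 - 3*R^4)*(2*c^2-1) - 12*R*c + 6
        ≤ ‖(UpsGauss σ lam r t)^2 - UpsGauss σ lam r (2*t)‖ := by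
      rw [← hre_diff]; exact Complex.re_le_norm _
    linarith [hxq, hB, hA2.le, hA2.ge, hkey]
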